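/- Let F be a free filter on ℕ, viewed as a subset of the Cantor space 2^ℕ via characteristic functions. If F is μ-measurable, then μ(F) = 0. (Equivalently: every nonprincipal filter, as a subset of 2^ℕ, either has measure zero or is nonmeasurable.) -/
import Mathlib


open Filter Set MeasureTheory

/-- The subset of the Cantor space `ℕ → Bool` corresponding to a filter `F` on `ℕ`,
identifying a subset of `ℕ` with its characteristic function. -/
def filterSet (F : Filter ℕ) : Set (ℕ → Bool) :=
  {x | {n | x n = true} ∈ F}

/-- `μ` is the fair-coin product measure on the Cantor space: every cylinder determined by
finitely many coordinates has the expected measure `(1/2)^(number of coordinates)`. -/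
def IsCoinMeasure (μ : Measure (ℕ → Bool)) : Prop :=
  ∀ (s : Finset ℕ) (f : ℕ → Bool), μ {x | ∀ i ∈ s, x i = f i} = (2 : ENNReal)⁻¹ ^ s.card

namespace FreeFilterAux

/-- Finite cylinders. -/
def cyl (s : Finset ℕ) (f : ℕ → Bool) : Set (ℕ → Bool) := {x | ∀ i ∈ s, x i = f i}

def cyls : Set (Set (ℕ → Bool)) := {S | ∃ s f, S = cyl s f}

lemma xor_eq_iff (a b c : Bool) : xor a b = c ↔ b = xor a c := by
  cases a <;> cases b <;> cases c <;> decide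

lemma measurableSet_cyl (s : Finset ℕ) (f : ℕ → Bool) : MeasurableSet (cyl s f) := by
  have h : cyl s f = ⋂ i ∈ s, (fun x : ℕ → Bool => x i) ⁻¹' {f i} := by
    ext x; simp [cyl]
  rw [h]
  exact MeasurableSet.biInter s.countable_toSet fun i _ =>
    (measurable_pi_apply i) (by trivial)

lemma isPiSystem_cyls : IsPiSystem cyls := by
  rintro _ ⟨s, f, rfl⟩ _ ⟨t, g, rfl⟩ ⟨y, hy⟩
  refine ⟨s ∪ t, fun n => if n ∈ s then f n else g n, ?_⟩
  obtain ⟨hy1, hy2⟩ := hy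
  have compat : ∀ i ∈ s, i ∈ t → f i = g i := fun i hs ht => by
    rw [← hy1 i hs, hy2 i ht]
  ext x
  simp only [cyl, mem_inter_iff, mem_setOf_eq, Finset.mem_union]
  constructor
  · rintro ⟨h1, h2⟩ i hi
    rcases hi with hi | hi
    · simp [hi, h1 i hi]
    · by_cases hs : i ∈ s
      · simp [hs, h1 i hs]
      · simp [hs, h2 i hi]
  · intro h
    constructor
    · intro i hi
      have := h i (Or.inl hi); simpa [hi] using this
    · intro i hi
      have := h i (Or.inr hi)
      by_cases hs : i ∈ s
      · rw [← compat i hs hi]; simpa [hs] using this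
      · simpa [hs] using this

lemma generateFrom_cyls :
    (inferInstance : MeasurableSpace (ℕ → Bool)) = MeasurableSpace.generateFrom cyls := by
  refine le_antisymm ?_ (MeasurableSpace.generateFrom_le fun S hS => by
    obtain ⟨s, f, rfl⟩ := hS; exact measurableSet_cyl s f)
  refine iSup_le fun i => ?_
  intro S hS
  obtain ⟨t, -, rfl⟩ := MeasurableSpace.measurableSet_comap.mp hS
  have h : (fun x : ℕ → Bool => x i) ⁻¹' t = ⋃ y ∈ t, cyl {i} (fun _ => y) := by
    ext x
    simp only [mem_preimage, mem_iUnion, cyl, mem_setOf_eq, Finset.mem_singleton]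
    constructor
    · intro hx; exact ⟨x i, hx, fun j hj => by rw [hj]⟩
    · rintro ⟨y, hy, hxy⟩; rw [hxy i rfl]; exact hy
  rw [h]
  exact MeasurableSet.biUnion t.to_countable fun y _ =>
    MeasurableSpace.measurableSet_generateFrom ⟨{i}, fun _ => y, rfl⟩

variable {μ : Measure (ℕ → Bool)}

lemma measure_cyl (hμ : IsCoinMeasure μ) (s : Finset ℕ) (f : ℕ → Bool) :
    μ (cyl s f) = (2 : ENNReal)⁻¹ ^ s.card := hμ s f

lemma measure_univ' (hμ : IsCoinMeasure μ) : μ Set.univ = 1 := by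
  have := hμ ∅ (fun _ => false)
  simpa using this

lemma isProbabilityMeasure (hμ : IsCoinMeasure μ) : IsProbabilityMeasure μ := ⟨measure_univ' hμ⟩

/-- The bit-flip map. -/
def T (g : ℕ → Bool) (x : ℕ → Bool) : ℕ → Bool := fun n => xor (g n) (x n)

lemma measurable_T (g : ℕ → Bool) : Measurable (T g) :=
  measurable_pi_lambda _ fun n =>
    (measurable_of_countable (fun b => xor (g n) b)).comp (measurable_pi_apply n)

lemma T_preimage_cyl (g : ℕ → Bool) (s : Finset ℕ) (f : ℕ → Bool) :
    T g ⁻¹' cyl s f = cyl s (fun n => xor (g n) (f n)) := by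
  ext x
  simp only [mem_preimage, cyl, mem_setOf_eq, T]
  exact forall₂_congr fun i _ => xor_eq_iff (g i) (x i) (f i)

lemma measurePreserving_T (hμ : IsCoinMeasure μ) (g : ℕ → Bool) : MeasurePreserving (T g) μ μ := by
  refine ⟨measurable_T g, ?_⟩
  have : IsProbabilityMeasure μ := isProbabilityMeasure hμ
  have : IsProbabilityMeasure (μ.map (T g)) :=
    Measure.isProbabilityMeasure_map (measurable_T g).aemeasurable
  refine ext_of_generate_finite cyls generateFrom_cyls isPiSystem_cyls ?_ ?_
  · rintro _ ⟨s, f, rfl⟩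
    rw [Measure.map_apply (measurable_T g) (measurableSet_cyl s f), T_preimage_cyl,
      measure_cyl hμ, measure_cyl hμ]
  · rw [measure_univ, measure_univ]

lemma cyl_eq_of_eqOn {s : Finset ℕ} {f f' : ℕ → Bool} (h : ∀ i ∈ s, f i = f' i) :
    cyl s f = cyl s f' := by
  ext x
  exact forall₂_congr fun i hi => by rw [h i hi]

lemma filterSet_preimage (F : Filter ℕ) (hfree : F ≤ Filter.cofinite) (g : ℕ → Bool)
    (hg : {n | g n = true}.Finite) : T g ⁻¹' filterSet F = filterSet F := by
  have hcof : {n | g n = false} ∈ Filter.cofinite := by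
    rw [Filter.mem_cofinite]
    refine hg.subset fun n hn => ?_
    simp only [mem_compl_iff, mem_setOf_eq] at hn ⊢
    simpa using hn
  have hF : ∀ᶠ n in F, g n = false := hfree hcof
  ext x
  simp only [mem_preimage, filterSet, mem_setOf_eq, T]
  rw [← Filter.eventually_iff, ← Filter.eventually_iff]
  exact Filter.eventually_congr (hF.mono fun n hn => by rw [hn]; simp)

lemma measure_inter_cyl (hμ : IsCoinMeasure μ) {A : Set (ℕ → Bool)}
    (hA : NullMeasurableSet A μ)
    (hinv : ∀ g : ℕ → Bool, {n | g n = true}.Finite → T g ⁻¹' A = A)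
    (s : Finset ℕ) (f : ℕ → Bool) :
    μ (A ∩ cyl s f) = μ A * (2 : ENNReal)⁻¹ ^ s.card := by
  classical
  set Ext : (s → Bool) → ℕ → Bool :=
    fun h n => if hn : n ∈ s then h ⟨n, hn⟩ else false with hExt
  have hExt_mem : ∀ (h : s → Bool) (i : s), Ext h i = h i := fun h i => by
    simp [hExt]
  -- all pieces have equal measure
  have key : ∀ h h' : s → Bool, μ (A ∩ cyl s (Ext h)) = μ (A ∩ cyl s (Ext h')) := by
    intro h h'
    set g : ℕ → Bool := fun n => xor (Ext h n) (Ext h' n) with hgdef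
    have hgfin : {n | g n = true}.Finite := by
      refine Set.Finite.subset s.finite_toSet fun n hn => ?_
      by_contra hns
      have hns' : n ∉ s := fun hmem => hns (Finset.mem_coe.mpr hmem)
      simp [hgdef, hExt, hns'] at hn
    have hpre : T g ⁻¹' (A ∩ cyl s (Ext h')) = A ∩ cyl s (Ext h) := by
      rw [preimage_inter, hinv g hgfin, T_preimage_cyl]
      congr 1
      refine cyl_eq_of_eqOn fun i hi => ?_
      show xor (g i) (Ext h' i) = Ext h i
      simp only [hgdef]
      cases (Ext h i) <;> cases (Ext h' i) <;> rfl
    calc μ (A ∩ cyl s (Ext h)) = μ (T g ⁻¹' (A ∩ cyl s (Ext h'))) := by rw [hpre]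
      _ = μ (A ∩ cyl s (Ext h')) :=
        (measurePreserving_T hμ g).measure_preimage
          (hA.inter (measurableSet_cyl s (Ext h')).nullMeasurableSet)
  -- the pieces partition A
  have hUnion : (⋃ h : s → Bool, A ∩ cyl s (Ext h)) = A := by
    rw [← inter_iUnion]
    refine inter_eq_self_of_subset_left fun x _ => ?_
    refine mem_iUnion.mpr ⟨fun i => x i, fun i hi => ?_⟩
    rw [hExt_mem (fun i : s => x i) ⟨i, hi⟩]
  have hdisj : Pairwise (Function.onFun Disjoint (fun h : s → Bool => A ∩ cyl s (Ext h))) := by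
    intro h h' hne
    rw [Function.onFun, Set.disjoint_left]
    rintro x ⟨-, hx⟩ ⟨-, hx'⟩
    obtain ⟨i, hi⟩ := Function.ne_iff.mp hne
    apply hi
    rw [← hExt_mem h i, ← hExt_mem h' i, ← hx i i.2, ← hx' i i.2]
  have hsum : μ A = ∑ h : s → Bool, μ (A ∩ cyl s (Ext h)) := by
    have := measure_iUnion₀ (μ := μ)
      (fun h h' hne => ((hdisj hne).aedisjoint))
      (fun h : s → Bool => hA.inter (measurableSet_cyl s (Ext h)).nullMeasurableSet)
    rw [hUnion, tsum_fintype] at this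
    exact this
  -- evaluate
  set h₀ : s → Bool := fun i => f i with hh₀
  have hf : cyl s f = cyl s (Ext h₀) := by
    refine cyl_eq_of_eqOn fun i hi => ?_
    rw [hExt_mem h₀ ⟨i, hi⟩]
  have hcard : μ A = (2 : ENNReal) ^ s.card * μ (A ∩ cyl s (Ext h₀)) := by
    rw [hsum]
    rw [Finset.sum_congr rfl fun h _ => key h h₀, Finset.sum_const, Finset.card_univ,
      Fintype.card_fun, Fintype.card_coe, Fintype.card_bool, nsmul_eq_mul]
    norm_cast
  rw [hf, hcard]
  rw [mul_comm ((2:ENNReal) ^ s.card), mul_assoc, ← mul_pow, ENNReal.mul_inv_cancel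
    (by norm_num) (by norm_num), one_pow, mul_one]

end FreeFilterAux

open FreeFilterAux

/-- If a free (proper, containing all cofinite sets) filter on `ℕ`, viewed as a subset of the
Cantor space, is measurable with respect to the completed fair-coin product measure `μ`
(i.e. is `μ`-null-measurable), then it has `μ`-measure zero. -/
theorem free_filter_nullMeasurable_measure_zero (μ : Measure (ℕ → Bool))
    (hμ : IsCoinMeasure μ) (F : Filter ℕ) (hproper : F.NeBot) (hfree : F ≤ Filter.cofinite)
    (hmeas : NullMeasurableSet (filterSet F) μ) :
    μ (filterSet F) = 0 := by
  classical
  set A := filterSet F with hAdef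
  have hPM : IsProbabilityMeasure μ := isProbabilityMeasure hμ
  have hinv : ∀ g : ℕ → Bool, {n | g n = true}.Finite → T g ⁻¹' A = A :=
    fun g hg => filterSet_preimage F hfree g hg
  -- μ A = μ A * μ A
  have hself : μ A = μ A * μ A := by
    obtain ⟨A', hA'sub, hA'm, hA'eq⟩ := hmeas.exists_measurable_subset_ae_eq
    have hμA' : μ A' = μ A := measure_congr hA'eq
    haveI : IsFiniteMeasure ((μ A) • μ) := by
      constructor
      rw [Measure.smul_apply, smul_eq_mul, measure_univ, mul_one]
      exact measure_lt_top μ A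
    have h1 : μ.restrict A = (μ A) • μ := by
      refine ext_of_generate_finite cyls generateFrom_cyls isPiSystem_cyls ?_ ?_
      · rintro _ ⟨s, f, rfl⟩
        rw [Measure.restrict_apply (measurableSet_cyl s f), Set.inter_comm,
          measure_inter_cyl hμ hmeas hinv s f, Measure.smul_apply, smul_eq_mul,
          measure_cyl hμ]
      · rw [Measure.restrict_apply_univ, Measure.smul_apply, smul_eq_mul,
          measure_univ, mul_one]
    have h2 := congrArg (fun ν : Measure (ℕ → Bool) => ν A') h1
    simp only [Measure.restrict_apply hA'm, Measure.smul_apply, smul_eq_mul] at h2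
    rw [Set.inter_eq_self_of_subset_left hA'sub, hμA'] at h2
    exact h2
  rcases eq_or_ne (μ A) 0 with h0 | h0
  · exact h0
  exfalso
  have h1 : μ A = 1 := by
    have hne : μ A ≠ ⊤ := measure_ne_top μ A
    have := hself
    nth_rewrite 1 [← mul_one (μ A)] at this
    exact ((ENNReal.mul_right_inj h0 hne).mp this).symm
  -- global bit flip
  set τ := T (fun _ => true) with hτ
  have hpreA : NullMeasurableSet (τ ⁻¹' A) μ :=
    hmeas.preimage (measurePreserving_T hμ _).quasiMeasurePreserving
  have hμτ : μ (τ ⁻¹' A) = μ A := (measurePreserving_T hμ _).measure_preimage hmeas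
  have hdisj : Disjoint A (τ ⁻¹' A) := by
    rw [Set.disjoint_left]
    intro x hx hx'
    have hx1 : {n | x n = true} ∈ F := hx
    have hx2 : {n | xor true (x n) = true} ∈ F := hx'
    have hint : ({n | x n = true} ∩ {n | xor true (x n) = true}) ∈ F :=
      Filter.inter_mem hx1 hx2
    have hempty : {n | x n = true} ∩ {n | xor true (x n) = true} = (∅ : Set ℕ) := by
      ext n
      simp only [mem_inter_iff, mem_setOf_eq, mem_empty_iff_false, iff_false, not_and]
      intro hn
      rw [hn]
      decide
    rw [hempty] at hint
    exact hproper.ne (Filter.empty_mem_iff_bot.mp hint)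
  have hadd : μ (A ∪ τ ⁻¹' A) = μ A + μ (τ ⁻¹' A) := measure_union₀ hpreA hdisj.aedisjoint
  have hle : μ (A ∪ τ ⁻¹' A) ≤ 1 := prob_le_one
  rw [hadd, hμτ, h1] at hle
  norm_num at hle
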